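/- Let (X, Y) be an (N+1)-dimensional consistent elliptical random vector, so that the conditional distribution of Y given X = x is elliptical with radius R* whose tail satisfies P(R* U > t) ∝ ∫_t^∞ c_{N+1} g_{N+1}(M(x) + u²) du, where for each d the generator satisfies c_d g_d(t) = λ_d t^{-(d+γ^{-1})/2} (1 + o(1)) as t → ∞ with λ_d > 0 and γ > 0. Then the conditional distribution Y | X = x is regularly varying with tail index (γ^{-1} + N)^{-1}; that is, denoting Φ_{R*}(t) = P(R* U^{(1)} ≤ t), one has lim_{t→∞} (1-Φ_{R*}(ωt))/(1-Φ_{R*}(t)) = ω^{-1/γ - N} for all ω > 0. -/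

import Mathlib

open MeasureTheory Filter Real

-- key bounds on the tail integral
lemma tail_bounds (β M lam : ℝ) (hβ : 1 < β) (hM : 0 < M) (hlam : 0 < lam)
    (h : ℝ → ℝ) (hmeas : Measurable h) (hpos : ∀ t, 0 ≤ h t)
    (hA : Tendsto (fun u : ℝ => h (M + u ^ 2) / (lam * u ^ (-(β + 1)))) atTop (nhds 1))
    (ε : ℝ) (hε : 0 < ε) (hε1 : ε < 1) :
    ∀ᶠ t in atTop, (1 - ε) * lam * (t ^ (-β) / β) ≤ (∫ u in Set.Ioi t, h (M + u ^ 2))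
      ∧ (∫ u in Set.Ioi t, h (M + u ^ 2)) ≤ (1 + ε) * lam * (t ^ (-β) / β) := by
  have hβ0 : (0:ℝ) < β := by linarith
  have hball : ∀ᶠ u in atTop, |h (M + u ^ 2) / (lam * u ^ (-(β + 1))) - 1| < ε := by
    have := hA (Metric.ball_mem_nhds 1 hε)
    simpa [Real.dist_eq] using this
  obtain ⟨T₀, hT₀⟩ := (hball.and (eventually_ge_atTop (1:ℝ))).exists_forall_of_atTop
  set T := max T₀ 1 with hT
  have hT1 : (1:ℝ) ≤ T := le_max_right _ _
  have hbound : ∀ u : ℝ, T ≤ u →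
      (1 - ε) * (lam * u ^ (-(β + 1))) ≤ h (M + u ^ 2) ∧
      h (M + u ^ 2) ≤ (1 + ε) * (lam * u ^ (-(β + 1))) := by
    intro u hu
    have hu0 : (0:ℝ) < u := lt_of_lt_of_le zero_lt_one (hT1.trans hu)
    have hD : 0 < lam * u ^ (-(β + 1)) := mul_pos hlam (rpow_pos_of_pos hu0 _)
    have h1 := (hT₀ u (le_trans (le_max_left _ _) hu)).1
    rw [abs_lt] at h1
    constructor
    · have : (1 - ε) < h (M + u ^ 2) / (lam * u ^ (-(β + 1))) := by linarith
      calc (1 - ε) * (lam * u ^ (-(β + 1)))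
          ≤ (h (M + u ^ 2) / (lam * u ^ (-(β + 1)))) * (lam * u ^ (-(β + 1))) :=
            mul_le_mul_of_nonneg_right this.le hD.le
        _ = h (M + u ^ 2) := div_mul_cancel₀ _ hD.ne'
    · have : h (M + u ^ 2) / (lam * u ^ (-(β + 1))) < (1 + ε) := by linarith
      calc h (M + u ^ 2) = (h (M + u ^ 2) / (lam * u ^ (-(β + 1)))) * (lam * u ^ (-(β + 1))) :=
            (div_mul_cancel₀ _ hD.ne').symm
        _ ≤ (1 + ε) * (lam * u ^ (-(β + 1))) := mul_le_mul_of_nonneg_right this.le hD.le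
  filter_upwards [eventually_ge_atTop T] with t ht
  have ht0 : (0:ℝ) < t := lt_of_lt_of_le zero_lt_one (hT1.trans ht)
  have hexp : -(β+1) < -1 := by linarith
  have hmf : AEStronglyMeasurable (fun u : ℝ => h (M + u ^ 2)) (volume.restrict (Set.Ioi t)) :=
    ((hmeas.comp ((measurable_id.pow_const 2).const_add M))).aestronglyMeasurable
  have hig : IntegrableOn (fun u : ℝ => (1 + ε) * (lam * u ^ (-(β + 1)))) (Set.Ioi t) := by
    have := (integrableOn_Ioi_rpow_of_lt hexp ht0)
    exact (this.const_mul lam).const_mul (1 + ε)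
  have hig' : IntegrableOn (fun u : ℝ => (1 - ε) * (lam * u ^ (-(β + 1)))) (Set.Ioi t) := by
    have := (integrableOn_Ioi_rpow_of_lt hexp ht0)
    exact (this.const_mul lam).const_mul (1 - ε)
  have hif : IntegrableOn (fun u : ℝ => h (M + u ^ 2)) (Set.Ioi t) := by
    refine hig.integrable.mono' hmf ?_
    filter_upwards [ae_restrict_mem measurableSet_Ioi] with u hu
    have : T ≤ u := ht.trans (le_of_lt hu)
    rw [Real.norm_eq_abs, abs_of_nonneg (hpos _)]
    exact (hbound u this).2
  have hIrpow : (∫ u in Set.Ioi t, u ^ (-(β+1))) = t ^ (-β) / β := by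
    rw [integral_Ioi_rpow_of_lt hexp ht0]
    rw [show -(β+1)+1 = -β by ring]
    rw [neg_div, div_neg, neg_neg]
  constructor
  · have := setIntegral_mono_on hig'.integrable hif measurableSet_Ioi
      (fun u hu => (hbound u (ht.trans (le_of_lt hu))).1)
    calc (1 - ε) * lam * (t ^ (-β) / β)
        = ∫ u in Set.Ioi t, (1 - ε) * (lam * u ^ (-(β + 1))) := by
          rw [integral_const_mul, integral_const_mul, hIrpow]; ring
      _ ≤ _ := this
  · have := setIntegral_mono_on hif hig.integrable measurableSet_Ioi
      (fun u hu => (hbound u (ht.trans (le_of_lt hu))).2)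
    calc (∫ u in Set.Ioi t, h (M + u ^ 2))
        ≤ ∫ u in Set.Ioi t, (1 + ε) * (lam * u ^ (-(β + 1))) := this
      _ = (1 + ε) * lam * (t ^ (-β) / β) := by
          rw [integral_const_mul, integral_const_mul, hIrpow]; ring

lemma tail_asymp (β M lam : ℝ) (hβ : 1 < β) (hM : 0 < M) (hlam : 0 < lam)
    (h : ℝ → ℝ) (hmeas : Measurable h) (hpos : ∀ t, 0 ≤ h t)
    (hA : Tendsto (fun u : ℝ => h (M + u ^ 2) / (lam * u ^ (-(β + 1)))) atTop (nhds 1)) :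
    Tendsto (fun t : ℝ => (∫ u in Set.Ioi t, h (M + u ^ 2)) * t ^ β) atTop
      (nhds (lam / β)) := by
  have hβ0 : (0:ℝ) < β := by linarith
  rw [Metric.tendsto_atTop]
  intro δ hδ
  set ε := min (1/2 : ℝ) (δ * β / (2 * lam)) with hεdef
  have hε : 0 < ε := lt_min (by norm_num) (by positivity)
  have hε1 : ε < 1 := lt_of_le_of_lt (min_le_left _ _) (by norm_num)
  have key := tail_bounds β M lam hβ hM hlam h hmeas hpos hA ε hε hε1
  rw [eventually_atTop] at key
  obtain ⟨T, hT⟩ := key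
  refine ⟨max T 1, fun t ht => ?_⟩
  have ht0 : (0:ℝ) < t := lt_of_lt_of_le zero_lt_one (le_trans (le_max_right _ _) ht)
  obtain ⟨hlo, hhi⟩ := hT t (le_trans (le_max_left _ _) ht)
  have hcancel : t ^ (-β) * t ^ β = 1 := by
    rw [← rpow_add ht0]; simp
  have htβ : (0:ℝ) < t ^ β := rpow_pos_of_pos ht0 _
  have hlo' : (1 - ε) * lam / β ≤ (∫ u in Set.Ioi t, h (M + u ^ 2)) * t ^ β := by
    have := mul_le_mul_of_nonneg_right hlo htβ.le
    calc (1 - ε) * lam / β = (1 - ε) * lam * (t ^ (-β) * t ^ β) / β := by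
          rw [hcancel]; ring
      _ = (1 - ε) * lam * (t ^ (-β) / β) * t ^ β := by ring
      _ ≤ _ := this
  have hhi' : (∫ u in Set.Ioi t, h (M + u ^ 2)) * t ^ β ≤ (1 + ε) * lam / β := by
    have := mul_le_mul_of_nonneg_right hhi htβ.le
    calc (∫ u in Set.Ioi t, h (M + u ^ 2)) * t ^ β
        ≤ (1 + ε) * lam * (t ^ (-β) / β) * t ^ β := this
      _ = (1 + ε) * lam * (t ^ (-β) * t ^ β) / β := by ring
      _ = (1 + ε) * lam / β := by rw [hcancel]; ring
  rw [Real.dist_eq, abs_lt]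
  have hεsmall : ε * lam / β ≤ δ / 2 := by
    have h1 : ε ≤ δ * β / (2 * lam) := min_le_right _ _
    rw [div_le_div_iff₀ hβ0 (by norm_num : (0:ℝ) < 2)]
    calc ε * lam * 2 ≤ (δ * β / (2 * lam)) * lam * 2 := by nlinarith
      _ = δ * β := by field_simp
  have e1 : (1 + ε) * lam / β = lam / β + ε * lam / β := by ring
  have e2 : (1 - ε) * lam / β = lam / β - ε * lam / β := by ring
  constructor
  · linarith
  · linarith

/-- If the conditional survival function is
`P(R* U > t) = K ∫_t^∞ c_{N+1} g_{N+1}(M(x) + u²) du` with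
`c_{N+1} g_{N+1}(t) = λ t^{-(N+1+γ⁻¹)/2}(1+o(1))`, then the conditional distribution is
regularly varying with tail index `(γ⁻¹+N)⁻¹`:
`lim_{t→∞} (1-Φ_{R*}(ωt))/(1-Φ_{R*}(t)) = ω^{-1/γ-N}` for all `ω > 0`. -/
theorem conditional_tail_index
    (N : ℕ) (hN : 1 ≤ N) (γ M K lam : ℝ)
    (hγ : 0 < γ) (hM : 0 < M) (hK : 0 < K) (hlam : 0 < lam)
    (h : ℝ → ℝ) (hmeas : Measurable h) (hpos : ∀ t, 0 ≤ h t)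
    (hasymp : Tendsto
      (fun t : ℝ => h t / (lam * t ^ (-(((N : ℝ) + 1 + 1 / γ) / 2))))
      atTop (nhds 1)) :
    ∀ ω : ℝ, 0 < ω →
      Tendsto (fun t : ℝ =>
          (K * ∫ u in Set.Ioi (ω * t), h (M + u ^ 2)) /
          (K * ∫ u in Set.Ioi t, h (M + u ^ 2)))
        atTop (nhds (ω ^ (-(1 / γ) - (N : ℝ)))) := by
  set β : ℝ := (N : ℝ) + 1 / γ with hβdef
  have hβ : 1 < β := by
    have : (1:ℝ) ≤ (N : ℝ) := by exact_mod_cast hN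
    have : 0 < 1 / γ := by positivity
    simp only [hβdef]; linarith
  set α : ℝ := ((N : ℝ) + 1 + 1 / γ) / 2 with hαdef
  have h2α : 2 * α = β + 1 := by rw [hαdef, hβdef]; ring
  -- pointwise asymptotics for u ↦ h (M + u²)
  have hφ : Tendsto (fun u : ℝ => M + u ^ 2) atTop atTop :=
    tendsto_atTop_add_const_left _ M (tendsto_pow_atTop (two_ne_zero))
  have hf1 : Tendsto (fun u : ℝ =>
      h (M + u ^ 2) / (lam * (M + u ^ 2) ^ (-α))) atTop (nhds 1) := hasymp.comp hφ
  have hg : Tendsto (fun u : ℝ => (M + u ^ 2) / u ^ 2) atTop (nhds 1) := by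
    have h0 : Tendsto (fun u : ℝ => M / u ^ 2 + 1) atTop (nhds 1) := by
      have := (tendsto_pow_atTop (two_ne_zero : (2:ℕ) ≠ 0) : Tendsto (fun u : ℝ => u ^ 2) atTop atTop)
      have := Tendsto.div_atTop (tendsto_const_nhds (x := M)) this
      simpa using this.add_const 1
    refine h0.congr' ?_
    filter_upwards [eventually_gt_atTop (0:ℝ)] with u hu
    have : (u:ℝ) ^ 2 ≠ 0 := by positivity
    field_simp
  have hf2 : Tendsto (fun u : ℝ => ((M + u ^ 2) / u ^ 2) ^ (-α)) atTop (nhds 1) := by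
    have := hg.rpow_const (p := -α) (Or.inl one_ne_zero)
    simpa using this
  have hA : Tendsto (fun u : ℝ => h (M + u ^ 2) / (lam * u ^ (-(β + 1)))) atTop (nhds 1) := by
    have hmul := hf1.mul hf2
    rw [mul_one] at hmul
    refine hmul.congr' ?_
    filter_upwards [eventually_gt_atTop (0:ℝ)] with u hu
    have hu2 : (0:ℝ) < u ^ 2 := by positivity
    have hMu : (0:ℝ) < M + u ^ 2 := by positivity
    have hrw : ((M + u ^ 2) / u ^ 2) ^ (-α) = (M + u ^ 2) ^ (-α) / u ^ (-(β + 1)) := by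
      rw [Real.div_rpow hMu.le hu2.le]
      congr 1
      rw [← Real.rpow_natCast u 2, ← Real.rpow_mul hu.le]
      norm_num
      congr 1
      linarith [h2α]
    rw [hrw]
    have hpow : (0:ℝ) < (M + u ^ 2) ^ (-α) := rpow_pos_of_pos hMu _
    have hupow : (0:ℝ) < u ^ (-(β + 1)) := rpow_pos_of_pos hu _
    field_simp
  have hS := tail_asymp β M lam hβ hM hlam h hmeas hpos hA
  intro ω hω
  have hωt : Tendsto (fun t : ℝ => ω * t) atTop atTop :=
    Tendsto.const_mul_atTop hω tendsto_id
  have hSω : Tendsto (fun t : ℝ =>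
      (∫ u in Set.Ioi (ω * t), h (M + u ^ 2)) * (ω * t) ^ β) atTop (nhds (lam / β)) :=
    hS.comp hωt
  have hLne : lam / β ≠ 0 := by positivity
  have hdiv := (hSω.div hS hLne)
  rw [div_self hLne] at hdiv
  have hfinal := hdiv.mul_const (ω ^ (-β))
  rw [one_mul] at hfinal
  have hexp : -β = -(1 / γ) - (N : ℝ) := by rw [hβdef]; ring
  rw [hexp] at hfinal
  refine hfinal.congr' ?_
  filter_upwards [eventually_gt_atTop (0:ℝ)] with t ht
  have htβ : (0:ℝ) < t ^ β := rpow_pos_of_pos ht _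
  have hωβ : (0:ℝ) < ω ^ β := rpow_pos_of_pos hω _
  set a := ∫ u in Set.Ioi (ω * t), h (M + u ^ 2)
  set b := ∫ u in Set.Ioi t, h (M + u ^ 2)
  have hωcancel : ω ^ β * ω ^ (-(1 / γ) - (N : ℝ)) = 1 := by
    rw [← hexp, ← rpow_add hω]; simp
  have hmr : (ω * t) ^ β = ω ^ β * t ^ β := mul_rpow hω.le ht.le
  calc a * (ω * t) ^ β / (b * t ^ β) * ω ^ (-(1 / γ) - (N : ℝ))
      = (a * ω ^ β) * t ^ β / (b * t ^ β) * ω ^ (-(1 / γ) - (N : ℝ)) := by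
        rw [hmr]; ring_nf
    _ = (a * ω ^ β) / b * ω ^ (-(1 / γ) - (N : ℝ)) := by
        rw [mul_div_mul_right _ _ htβ.ne']
    _ = a * (ω ^ β * ω ^ (-(1 / γ) - (N : ℝ))) / b := by ring
    _ = a / b := by rw [hωcancel, mul_one]
    _ = (K * a) / (K * b) := (mul_div_mul_left _ _ hK.ne').symm
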